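/- arXiv:2306.06636 — 3 statements merged into one kernel-verified Lean document; each statement's English description precedes it below -/
import Mathlib

section
/- If a₋, a₊ > a_m > 0, then the determinant of the center-stencil reconstruction matrix M (with rows (1, −(1+a₋), (3(1+a₋)² + a₋² − 1)/2), (1, 0, 0), (1, 1+a₊, (3(1+a₊)² + a₊² − 1)/2)) is strictly greater than 2(a_m + 1)²(2a_m + 1); in particular M is invertible. -/
theorem center_stencil_det_lower_bound (am aneg apos : ℝ)
    (ham : 0 < am) (haneg : am < aneg) (hapos : am < apos) :
    (Matrix.det !![1, -(1 + aneg), (3*(1 + aneg)^2 + aneg^2 - 1)/2;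
                   1, 0, 0;
                   1, 1 + apos, (3*(1 + apos)^2 + apos^2 - 1)/2]) >
        2 * (am + 1)^2 * (2*am + 1) ∧
    IsUnit (!![1, -(1 + aneg), (3*(1 + aneg)^2 + aneg^2 - 1)/2;
               1, 0, 0;
               1, 1 + apos, (3*(1 + apos)^2 + apos^2 - 1)/2] : Matrix (Fin 3) (Fin 3) ℝ) := by
  have hdet : (Matrix.det !![1, -(1 + aneg), (3*(1 + aneg)^2 + aneg^2 - 1)/2;
                   1, 0, 0;
                   1, 1 + apos, (3*(1 + apos)^2 + apos^2 - 1)/2]) >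
        2 * (am + 1)^2 * (2*am + 1) := by
    simp [Matrix.det_fin_three]
    nlinarith [sq_nonneg (aneg - am), sq_nonneg (apos - am), mul_pos ham ham,
      mul_pos (sub_pos.2 haneg) (sub_pos.2 hapos), sq_nonneg am]
  refine ⟨hdet, ?_⟩
  rw [Matrix.isUnit_iff_isUnit_det, isUnit_iff_ne_zero]
  have : (0:ℝ) < 2 * (am + 1)^2 * (2*am + 1) := by positivity
  linarith [hdet]
end

section
/- For the backward-stencil reconstruction matrix with b₋₂ = −(1 + 2a₁ + a₂) and b₋₁ = −(1 + a₁), i.e., the 3×3 matrix with rows (1, b₋₂, (3b₋₂² + a₂² − 1)/2), (1, b₋₁, (3b₋₁² + a₁² − 1)/2), (1, 0, 0), the determinant equals 2(a₁ + 1)(a₁ + a₂)(a₁ + a₂ + 1). Consequently, if a₁, a₂ > a_m > 0, the determinant exceeds 4a_m(a_m + 1)(2a_m + 1), so the matrix is invertible. -/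
theorem backward_stencil_det (am a1 a2 b2 b1 : ℝ)
    (ham : 0 < am) (ha1 : am < a1) (ha2 : am < a2)
    (hb2 : b2 = -(1 + 2*a1 + a2)) (hb1 : b1 = -(1 + a1)) :
    (Matrix.det !![1, b2, (3*b2^2 + a2^2 - 1)/2;
                   1, b1, (3*b1^2 + a1^2 - 1)/2;
                   1, 0, 0]) = 2 * (a1 + 1) * (a1 + a2) * (a1 + a2 + 1) ∧
    (Matrix.det !![1, b2, (3*b2^2 + a2^2 - 1)/2;
                   1, b1, (3*b1^2 + a1^2 - 1)/2;
                   1, 0, 0]) > 4 * am * (am + 1) * (2*am + 1) ∧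
    IsUnit (!![1, b2, (3*b2^2 + a2^2 - 1)/2;
               1, b1, (3*b1^2 + a1^2 - 1)/2;
               1, 0, 0] : Matrix (Fin 3) (Fin 3) ℝ) := by
  have hdet : (Matrix.det !![1, b2, (3*b2^2 + a2^2 - 1)/2;
                   1, b1, (3*b1^2 + a1^2 - 1)/2;
                   1, 0, 0]) = 2 * (a1 + 1) * (a1 + a2) * (a1 + a2 + 1) := by
    rw [Matrix.det_fin_three]
    simp [Matrix.cons_val_zero, Matrix.cons_val_one, Matrix.head_cons, Matrix.head_fin_const,
      Matrix.vecHead, Matrix.vecTail]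
    subst hb2 hb1; ring
  have hgt : 2 * (a1 + 1) * (a1 + a2) * (a1 + a2 + 1) > 4 * am * (am + 1) * (2*am + 1) := by
    have h1 : (0:ℝ) < am + 1 := by linarith
    have h2 : (0:ℝ) < 2*am := by linarith
    have h3 : (0:ℝ) < 2*am + 1 := by linarith
    calc 4 * am * (am + 1) * (2*am + 1) = 2 * ((am + 1) * ((2*am) * (2*am + 1))) := by ring
      _ < 2 * ((a1 + 1) * ((a1 + a2) * (a1 + a2 + 1))) := by
          apply mul_lt_mul_of_pos_left _ (by norm_num)
          apply mul_lt_mul (by linarith) ?_ (by positivity) (by linarith)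
          apply le_of_lt
          apply mul_lt_mul (by linarith) (by linarith) (by positivity) (by linarith)
      _ = 2 * (a1 + 1) * (a1 + a2) * (a1 + a2 + 1) := by ring
  refine ⟨hdet, hdet ▸ hgt, ?_⟩
  rw [Matrix.isUnit_iff_isUnit_det, hdet]
  have : (0:ℝ) < 4 * am * (am + 1) * (2*am + 1) := by positivity
  exact (by linarith : (0:ℝ) < 2 * (a1 + 1) * (a1 + a2) * (a1 + a2 + 1)).ne'.isUnit
end

section
/- For the forward-stencil reconstruction matrix with b₊₁ = 1 + a₁ and b₊₂ = 1 + 2a₁ + a₂, i.e., the 3×3 matrix with rows (1, 0, 0), (1, b₊₁, (3b₊₁² + a₁² − 1)/2), (1, b₊₂, (3b₊₂² + a₂² − 1)/2), the determinant equals 2(a₁ + 1)(a₁ + a₂)(a₁ + a₂ + 1), and hence is positive whenever a₁, a₂ > 0. -/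
theorem forward_stencil_det (a1 a2 b1 b2 : ℝ)
    (ha1 : 0 < a1) (ha2 : 0 < a2)
    (hb1 : b1 = 1 + a1) (hb2 : b2 = 1 + 2*a1 + a2) :
    (Matrix.det !![1, 0, 0;
                   1, b1, (3*b1^2 + a1^2 - 1)/2;
                   1, b2, (3*b2^2 + a2^2 - 1)/2]) =
        2 * (a1 + 1) * (a1 + a2) * (a1 + a2 + 1) ∧
    0 < (Matrix.det !![1, 0, 0;
                       1, b1, (3*b1^2 + a1^2 - 1)/2;
                       1, b2, (3*b2^2 + a2^2 - 1)/2]) := by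
  have hdet : (Matrix.det !![1, 0, 0;
                   1, b1, (3*b1^2 + a1^2 - 1)/2;
                   1, b2, (3*b2^2 + a2^2 - 1)/2]) =
        2 * (a1 + 1) * (a1 + a2) * (a1 + a2 + 1) := by
    subst hb1 hb2
    simp [Matrix.det_fin_three]
    ring
  refine ⟨hdet, hdet ▸ ?_⟩
  positivity
end
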